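/- Let Q be a coset of a finite subgroup H of an abelian group G and let 1 ≤ k ≤ |Q| − 1. Then k∧Q equals the coset kQ (the coset of H consisting of sums of k elements of Q), unless k ∈ {2, |Q| − 2} and H is an elementary 2-subgroup, in which case k∧Q contains all but exactly one element of kQ. -/

import Mathlib

open Finset Pointwise

set_option linter.unusedSectionVars false

/-- The set of sums of `k` distinct elements of `A`. -/
def nSum {G : Type*} [AddCommGroup G] [DecidableEq G] (k : ℕ) (A : Finset G) : Finset G :=
  (A.powersetCard k).image fun B => B.sum id


lemma eq_of_diff {G : Type*} [AddCommGroup G] {x y u v : G} (h : x = y)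
    (huv : u - v = y - x) : u = v := by
  have h0 : u - v = 0 := by rw [huv, ← h, sub_self]
  exact sub_eq_zero.mp h0

section helpers
variable {G : Type*} [AddCommGroup G] [DecidableEq G]

lemma mem_nSum {k : ℕ} {A : Finset G} {c : G} :
    c ∈ nSum k A ↔ ∃ B, B ⊆ A ∧ B.card = k ∧ B.sum id = c := by
  simp only [nSum, Finset.mem_image, Finset.mem_powersetCard]
  tauto

lemma memQ_iff {H : AddSubgroup G} {g : G} {Q : Finset G}
    (hQ : (Q : Set G) = g +ᵥ (H : Set G)) (x : G) : x ∈ Q ↔ x - g ∈ H := by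
  have : x ∈ (Q : Set G) ↔ x ∈ g +ᵥ (H : Set G) := by rw [hQ]
  simp only [Finset.mem_coe] at this
  rw [this, Set.mem_vadd_set_iff_neg_vadd_mem]
  simp [neg_add_eq_sub, SetLike.mem_coe]

lemma sum_mem_coset {H : AddSubgroup G} {g : G} {Q : Finset G}
    (hQ : (Q : Set G) = g +ᵥ (H : Set G)) {B : Finset G} (hB : B ⊆ Q) :
    B.sum id - B.card • g ∈ H := by
  have : B.sum id - B.card • g = B.sum (fun x => x - g) := by
    rw [Finset.sum_sub_distrib, Finset.sum_const]
    simp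
  rw [this]
  exact AddSubgroup.sum_mem H (fun x hx => (memQ_iff hQ x).1 (hB hx))

lemma base3 {H : AddSubgroup G} {g : G} {Q : Finset G}
    (hQ : (Q : Set G) = g +ᵥ (H : Set G)) {A : Finset G} (hA : A ⊆ Q)
    (hcard : Q.card + 6 ≤ 2 * A.card) {c : G} (hc : c - (3:ℕ) • g ∈ H) :
    ∃ B, B ⊆ A ∧ B.card = 3 ∧ B.sum id = c := by
  classical
  have h3g : (3:ℕ) • g = g + g + g := by
    rw [show (3:ℕ) = 2 + 1 by rfl, add_nsmul, two_nsmul, one_nsmul]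
  set n := Q.card with hn
  set m := A.card with hm
  have hmn : m ≤ n := Finset.card_le_card hA
  have hm6 : 6 ≤ m := by omega
  have h1 : n - m + 6 ≤ m := by omega
  set b1 := (A ×ˢ A).filter (fun p => p.1 = p.2) with hb1
  set b2 := (A ×ˢ A).filter (fun p => c - p.1 - p.2 = p.1) with hb2
  set b3 := (A ×ˢ A).filter (fun p => c - p.1 - p.2 = p.2) with hb3
  set b4 := (A ×ˢ A).filter (fun p => c - p.1 - p.2 ∉ A) with hb4
  have hc1 : b1.card ≤ m := by
    apply Finset.card_le_card_of_injOn (fun p => p.1)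
    · intro p hp
      simp only [hb1, Finset.mem_coe, Finset.mem_filter, Finset.mem_product] at hp
      exact hp.1.1
    · intro p hp q hq hpq
      simp only [hb1, Finset.coe_filter, Set.mem_setOf_eq, Finset.mem_product] at hp hq
      have := hp.2; have := hq.2
      ext
      · exact hpq
      · rw [← hp.2, ← hq.2]; exact hpq
  have hc2 : b2.card ≤ m := by
    apply Finset.card_le_card_of_injOn (fun p => p.1)
    · intro p hp
      simp only [hb2, Finset.mem_coe, Finset.mem_filter, Finset.mem_product] at hp
      exact hp.1.1
    · intro p hp q hq hpq
      simp only [hb2, Finset.coe_filter, Set.mem_setOf_eq, Finset.mem_product] at hp hq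
      have e1 : p.2 = c - p.1 - p.1 := eq_of_diff hp.2 (by abel)
      have e2 : q.2 = c - q.1 - q.1 := eq_of_diff hq.2 (by abel)
      simp only at hpq
      ext
      · exact hpq
      · rw [e1, e2, hpq]
  have hc3 : b3.card ≤ m := by
    apply Finset.card_le_card_of_injOn (fun p => p.2)
    · intro p hp
      simp only [hb3, Finset.mem_coe, Finset.mem_filter, Finset.mem_product] at hp
      exact hp.1.2
    · intro p hp q hq hpq
      simp only [hb3, Finset.coe_filter, Set.mem_setOf_eq, Finset.mem_product] at hp hq
      have e1 : p.1 = c - p.2 - p.2 := eq_of_diff hp.2 (by abel)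
      have e2 : q.1 = c - q.2 - q.2 := eq_of_diff hq.2 (by abel)
      simp only at hpq
      ext
      · rw [e1, e2, hpq]
      · exact hpq
  have hc4 : b4.card ≤ m * (n - m) := by
    have : b4.card ≤ (A ×ˢ (Q \ A)).card := by
      apply Finset.card_le_card_of_injOn (fun p => (p.1, c - p.1 - p.2))
      · intro p hp
        simp only [hb4, Finset.mem_coe, Finset.mem_filter, Finset.mem_product] at hp
        simp only [Finset.mem_coe, Finset.mem_product, Finset.mem_sdiff]
        refine ⟨hp.1.1, ?_, hp.2⟩
        rw [memQ_iff hQ]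
        have m1 : p.1 - g ∈ H := (memQ_iff hQ p.1).1 (hA hp.1.1)
        have m2 : p.2 - g ∈ H := (memQ_iff hQ p.2).1 (hA hp.1.2)
        have : c - p.1 - p.2 - g = (c - (3:ℕ) • g) - (p.1 - g) - (p.2 - g) := by
          rw [h3g]; abel
        rw [this]
        exact AddSubgroup.sub_mem H (AddSubgroup.sub_mem H hc m1) m2
      · intro p hp q hq hpq
        simp only [Prod.mk.injEq] at hpq
        obtain ⟨h1', h2'⟩ := hpq
        have : p.2 = q.2 := by
          have := h2'; rw [h1'] at this
          exact sub_right_injective this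
        ext
        · exact h1'
        · exact this
    calc b4.card ≤ (A ×ˢ (Q \ A)).card := this
      _ = m * (Q \ A).card := by rw [Finset.card_product]
      _ = m * (n - m) := by rw [Finset.card_sdiff_of_subset hA]
  set good := (A ×ˢ A) \ (b1 ∪ b2 ∪ b3 ∪ b4) with hgood
  have hsub : A ×ˢ A ⊆ (b1 ∪ b2 ∪ b3 ∪ b4) ∪ good := by
    intro p hp
    by_cases h : p ∈ b1 ∪ b2 ∪ b3 ∪ b4
    · exact Finset.mem_union_left _ h
    · exact Finset.mem_union_right _ (Finset.mem_sdiff.2 ⟨hp, h⟩)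
  have hcards : m * m ≤ (b1 ∪ b2 ∪ b3 ∪ b4).card + good.card := by
    calc m * m = (A ×ˢ A).card := by rw [Finset.card_product]
      _ ≤ ((b1 ∪ b2 ∪ b3 ∪ b4) ∪ good).card := Finset.card_le_card hsub
      _ ≤ (b1 ∪ b2 ∪ b3 ∪ b4).card + good.card := Finset.card_union_le _ _
  have hbadsc : (b1 ∪ b2 ∪ b3 ∪ b4).card ≤ m + m + m + m * (n - m) := by
    calc (b1 ∪ b2 ∪ b3 ∪ b4).card ≤ (b1 ∪ b2 ∪ b3).card + b4.card := Finset.card_union_le _ _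
      _ ≤ ((b1 ∪ b2).card + b3.card) + b4.card := by
          exact Nat.add_le_add_right (Finset.card_union_le _ _) _
      _ ≤ ((b1.card + b2.card) + b3.card) + b4.card := by
          exact Nat.add_le_add_right (Nat.add_le_add_right (Finset.card_union_le _ _) _) _
      _ ≤ m + m + m + m * (n - m) := by
          exact Nat.add_le_add (Nat.add_le_add (Nat.add_le_add hc1 hc2) hc3) hc4
  have harith : m + m + m + m * (n - m) < m * m := by
    have key : m * (n - m) + 6 * m ≤ m * m := by
      calc m * (n - m) + 6 * m = m * ((n - m) + 6) := by ring
        _ ≤ m * m := Nat.mul_le_mul_left m h1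
    omega
  have hgoodpos : 0 < good.card := by omega
  obtain ⟨p, hp⟩ := Finset.card_pos.1 hgoodpos
  rw [hgood, Finset.mem_sdiff] at hp
  obtain ⟨hpA, hnb⟩ := hp
  have hb1' : p ∉ b1 := fun h => hnb (by simp [Finset.mem_union, h])
  have hb2' : p ∉ b2 := fun h => hnb (by simp [Finset.mem_union, h])
  have hb3' : p ∉ b3 := fun h => hnb (by simp [Finset.mem_union, h])
  have hb4' : p ∉ b4 := fun h => hnb (by simp [Finset.mem_union, h])
  obtain ⟨ha1, ha2⟩ := Finset.mem_product.1 hpA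
  have hne12 : p.1 ≠ p.2 := fun h => hb1' (Finset.mem_filter.2 ⟨hpA, h⟩)
  have hne31 : c - p.1 - p.2 ≠ p.1 := fun h => hb2' (Finset.mem_filter.2 ⟨hpA, h⟩)
  have hne32 : c - p.1 - p.2 ≠ p.2 := fun h => hb3' (Finset.mem_filter.2 ⟨hpA, h⟩)
  have hd : c - p.1 - p.2 ∈ A := by
    by_contra hcon
    exact hb4' (Finset.mem_filter.2 ⟨hpA, hcon⟩)
  refine ⟨{p.1, p.2, c - p.1 - p.2}, ?_, ?_, ?_⟩
  · intro x hx
    simp only [Finset.mem_insert, Finset.mem_singleton] at hx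
    rcases hx with h | h | h <;> subst h
    exacts [ha1, ha2, hd]
  · rw [Finset.card_insert_of_notMem, Finset.card_insert_of_notMem, Finset.card_singleton]
    · simp only [Finset.mem_singleton]
      exact fun h => hne32 h.symm
    · simp only [Finset.mem_insert, Finset.mem_singleton]
      push_neg
      exact ⟨hne12, fun h => hne31 h.symm⟩
  · rw [Finset.sum_insert, Finset.sum_insert, Finset.sum_singleton]
    · simp only [id]
      abel
    · simp only [Finset.mem_singleton]
      exact fun h => hne32 h.symm
    · simp only [Finset.mem_insert, Finset.mem_singleton]
      push_neg
      exact ⟨hne12, fun h => hne31 h.symm⟩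

lemma main_ge3 {H : AddSubgroup G} {g : G} {Q : Finset G}
    (hQ : (Q : Set G) = g +ᵥ (H : Set G)) {k : ℕ} (hk : 3 ≤ k) :
    ∀ A : Finset G, A ⊆ Q → Q.card + 2 * k ≤ 2 * A.card →
      ∀ c : G, c - k • g ∈ H → ∃ B, B ⊆ A ∧ B.card = k ∧ B.sum id = c := by
  induction k, hk using Nat.le_induction with
  | base =>
    intro A hA hcard c hc
    exact base3 hQ hA hcard hc
  | succ k hk ih =>
    intro A hA hcard c hc
    have hAne : A.Nonempty := Finset.card_pos.1 (by omega)
    obtain ⟨a, ha⟩ := hAne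
    have hcA : 1 ≤ A.card := Finset.card_pos.2 ⟨a, ha⟩
    have hc' : (c - a) - k • g ∈ H := by
      have heq : (c - a) - k • g = (c - (k + 1) • g) - (a - g) := by
        rw [succ_nsmul]; abel
      rw [heq]
      exact AddSubgroup.sub_mem H hc ((memQ_iff hQ a).1 (hA ha))
    obtain ⟨B, hB, hBcard, hBsum⟩ := ih (A.erase a) ((Finset.erase_subset a A).trans hA)
      (by rw [Finset.card_erase_of_mem ha]; omega) (c - a) hc'
    have haB : a ∉ B := fun h => (Finset.mem_erase.1 (hB h)).1 rfl
    refine ⟨insert a B, ?_, ?_, ?_⟩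
    · rw [Finset.insert_subset_iff]
      exact ⟨ha, hB.trans (Finset.erase_subset a A)⟩
    · rw [Finset.card_insert_of_notMem haB, hBcard]
    · rw [Finset.sum_insert haB, hBsum, id]
      exact add_sub_cancel a c

lemma pair_lemma {H : AddSubgroup G} {g : G} {Q : Finset G}
    (hQ : (Q : Set G) = g +ᵥ (H : Set G)) {c a : G} (ha : a ∈ Q)
    (hc : c - (2:ℕ) • g ∈ H) (hne : a + a ≠ c) :
    ∃ B, B ⊆ Q ∧ B.card = 2 ∧ B.sum id = c := by
  have h2g : (2:ℕ) • g = g + g := two_nsmul g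
  have hca : c - a ∈ Q := by
    rw [memQ_iff hQ]
    have heq : (c - a) - g = (c - (2:ℕ) • g) - (a - g) := by rw [h2g]; abel
    rw [heq]
    exact AddSubgroup.sub_mem H hc ((memQ_iff hQ a).1 ha)
  have hd : a ≠ c - a := fun h => hne (by rw [eq_sub_iff_add_eq] at h; rw [add_comm]; exact h)
  refine ⟨{a, c - a}, ?_, ?_, ?_⟩
  · intro x hx
    rcases Finset.mem_insert.1 hx with h | h
    · exact h ▸ ha
    · exact (Finset.mem_singleton.1 h) ▸ hca
  · rw [Finset.card_insert_of_notMem (by simpa using hd), Finset.card_singleton]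
  · rw [Finset.sum_pair hd]
    simp only [id]
    abel

lemma two_nonelem {H : AddSubgroup G} {g : G} {Q : Finset G}
    (hQ : (Q : Set G) = g +ᵥ (H : Set G)) (hQne : Q.Nonempty)
    (hne2 : ∃ h₀ ∈ H, h₀ + h₀ ≠ 0) {c : G} (hc : c - (2:ℕ) • g ∈ H) :
    ∃ B, B ⊆ Q ∧ B.card = 2 ∧ B.sum id = c := by
  obtain ⟨h₀, hh₀, hh₀'⟩ := hne2
  obtain ⟨a, ha⟩ := hQne
  by_cases hca : a + a = c
  · have ha' : a + h₀ ∈ Q := by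
      rw [memQ_iff hQ]
      have heq : (a + h₀) - g = (a - g) + h₀ := by abel
      rw [heq]
      exact AddSubgroup.add_mem H ((memQ_iff hQ a).1 ha) hh₀
    apply pair_lemma hQ ha' hc
    intro hcon
    apply hh₀'
    have : (a + a) + (h₀ + h₀) = c := by rw [← hcon]; abel
    rw [hca] at this
    exact add_left_cancel (by rw [this, add_zero])
  · exact pair_lemma hQ ha hc hca

lemma two_elem_sum_ne {H : AddSubgroup G} {g : G} {Q : Finset G}
    (hQ : (Q : Set G) = g +ᵥ (H : Set G)) (h2 : ∀ x ∈ H, x + x = 0)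
    {B : Finset G} (hB : B ⊆ Q) (hcard : B.card = 2) : B.sum id ≠ g + g := by
  obtain ⟨a, b, hab, rfl⟩ := Finset.card_eq_two.1 hcard
  rw [Finset.sum_pair hab]
  simp only [id]
  intro hcon
  apply hab
  have hxa : a - g ∈ H := (memQ_iff hQ a).1 (hB (Finset.mem_insert_self a {b}))
  have hxb : b - g ∈ H := (memQ_iff hQ b).1 (hB (by simp))
  have hxy : (a - g) + (b - g) = 0 := by
    have heq : (a - g) + (b - g) = (a + b) - (g + g) := by abel
    rw [heq, hcon, sub_self]
  have hxx : (a - g) + (a - g) = 0 := h2 _ hxa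
  have h1 : b - g = -(a - g) := eq_neg_of_add_eq_zero_right hxy
  have h2' : a - g = -(a - g) := eq_neg_of_add_eq_zero_right hxx
  have : a - g = b - g := by rw [h2', ← h1]
  exact sub_left_injective this

lemma two_elem_mem {H : AddSubgroup G} {g : G} {Q : Finset G}
    (hQ : (Q : Set G) = g +ᵥ (H : Set G)) (hQne : Q.Nonempty) (h2 : ∀ x ∈ H, x + x = 0)
    {c : G} (hc : c - (2:ℕ) • g ∈ H) (hne : c ≠ g + g) :
    ∃ B, B ⊆ Q ∧ B.card = 2 ∧ B.sum id = c := by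
  obtain ⟨a, ha⟩ := hQne
  apply pair_lemma hQ ha hc
  intro hcon
  apply hne
  have hxa : a - g ∈ H := (memQ_iff hQ a).1 ha
  have hxx : (a - g) + (a - g) = 0 := h2 _ hxa
  have heq : (a + a) - (g + g) = (a - g) + (a - g) := by abel
  have heq : (a + a) - (g + g) = (a - g) + (a - g) := by abel
  have h0 : (a + a) - (g + g) = 0 := by rw [heq, hxx]
  rw [← hcon]
  exact sub_eq_zero.1 h0

lemma compl_mem {Q : Finset G} {j : ℕ} (hj : j ≤ Q.card) {c : G} :
    c ∈ nSum (Q.card - j) Q ↔ ∃ t, t ∈ nSum j Q ∧ c = Q.sum id - t := by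
  rw [mem_nSum]
  constructor
  · rintro ⟨B, hBQ, hBcard, rfl⟩
    refine ⟨(Q \ B).sum id, mem_nSum.2 ⟨Q \ B, Finset.sdiff_subset, ?_, rfl⟩, ?_⟩
    · rw [Finset.card_sdiff_of_subset hBQ]
      have := Finset.card_le_card hBQ
      omega
    · rw [← Finset.sum_sdiff hBQ]; abel
  · rintro ⟨t, ht, rfl⟩
    obtain ⟨B, hBQ, hBcard, rfl⟩ := mem_nSum.1 ht
    refine ⟨Q \ B, Finset.sdiff_subset, ?_, ?_⟩
    · rw [Finset.card_sdiff_of_subset hBQ, hBcard]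
    · rw [← Finset.sum_sdiff hBQ]; abel

lemma even_card_invol {α : Type*} [DecidableEq α] (f : α → α) :
    ∀ S : Finset α, (∀ x ∈ S, f x ∈ S) → (∀ x ∈ S, f (f x) = x) →
      (∀ x ∈ S, f x ≠ x) → Even S.card := by
  intro S
  induction S using Finset.strongInduction with
  | _ S ih =>
    intro hmaps hff hfix
    rcases S.eq_empty_or_nonempty with rfl | ⟨a, ha⟩
    · simp
    · have hfa : f a ∈ S := hmaps a ha
      have hfa_ne : f a ≠ a := hfix a ha
      set S' := (S.erase a).erase (f a) with hS'
      have hfaea : f a ∈ S.erase a := Finset.mem_erase.2 ⟨hfa_ne, hfa⟩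
      have hcard : S'.card = S.card - 2 := by
        rw [hS', Finset.card_erase_of_mem hfaea, Finset.card_erase_of_mem ha]
        omega
      have hsub : S' ⊂ S := by
        apply Finset.ssubset_of_subset_of_ssubset (Finset.erase_subset _ _)
        exact Finset.erase_ssubset ha
      have hmem' : ∀ x, x ∈ S' → (x ∈ S ∧ x ≠ a ∧ x ≠ f a) := by
        intro x hx
        rw [hS', Finset.mem_erase, Finset.mem_erase] at hx
        exact ⟨hx.2.2, hx.2.1, hx.1⟩
      have hmem'' : ∀ x, x ∈ S → x ≠ a → x ≠ f a → x ∈ S' := by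
        intro x hx h1 h2
        rw [hS', Finset.mem_erase, Finset.mem_erase]
        exact ⟨h2, h1, hx⟩
      have hmaps' : ∀ x ∈ S', f x ∈ S' := by
        intro x hx
        obtain ⟨hxS, hxa, hxfa⟩ := hmem' x hx
        apply hmem'' _ (hmaps x hxS)
        · intro h
          apply hxfa
          rw [← hff x hxS, h]
        · intro h
          apply hxa
          have := hff x hxS
          rw [h, hff a ha] at this
          exact this.symm
      have hEven := ih S' hsub (fun x hx => hmaps' x hx)
        (fun x hx => hff x (hmem' x hx).1) (fun x hx => hfix x (hmem' x hx).1)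
      have h2le : 2 ≤ S.card := Finset.one_lt_card.2 ⟨a, ha, f a, hfa, hfa_ne.symm⟩
      obtain ⟨t, ht⟩ := hEven
      exact ⟨t + 1, by omega⟩

end helpers

theorem stmt13 {G : Type*} [AddCommGroup G] [DecidableEq G]
    (H : AddSubgroup G) (g : G) (Q : Finset G)
    (hQ : (Q : Set G) = g +ᵥ (H : Set G))
    (k : ℕ) (hk1 : 1 ≤ k) (hk2 : k ≤ Q.card - 1) :
    (¬ ((k = 2 ∨ k = Q.card - 2) ∧ ∀ x ∈ H, x + x = 0) →
      (nSum k Q : Set G) = (k • g) +ᵥ (H : Set G)) ∧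
    (((k = 2 ∨ k = Q.card - 2) ∧ ∀ x ∈ H, x + x = 0) →
      ∃ x ∈ (k • g) +ᵥ (H : Set G),
        (nSum k Q : Set G) = ((k • g) +ᵥ (H : Set G)) \ {x}) := by
  have hQcard : k + 1 ≤ Q.card := by
    rcases Nat.eq_zero_or_pos Q.card with h | h
    · omega
    · omega
  have hQne : Q.Nonempty := Finset.card_pos.1 (by omega)
  have hmemco : ∀ (j : ℕ) (x : G), x ∈ (j • g) +ᵥ (H : Set G) ↔ x - j • g ∈ H := by
    intro j x
    rw [Set.mem_vadd_set_iff_neg_vadd_mem]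
    simp only [vadd_eq_add, neg_add_eq_sub, SetLike.mem_coe]
  have hfwd : ∀ x ∈ nSum k Q, x - k • g ∈ H := by
    intro x hx
    obtain ⟨B, hB, hBc, rfl⟩ := mem_nSum.1 hx
    have := sum_mem_coset hQ hB
    rwa [hBc] at this
  have hsig : Q.sum id - Q.card • g ∈ H := sum_mem_coset hQ (subset_refl Q)
  -- the "small j" existence lemma packaged
  have small_exists : ∀ j : ℕ,
      (j = 1 ∨ (j = 2 ∧ ∃ h₀ ∈ H, h₀ + h₀ ≠ 0) ∨ (3 ≤ j ∧ 2 * j ≤ Q.card)) →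
      ∀ c : G, c - j • g ∈ H → c ∈ nSum j Q := by
    intro j hcase c hc
    rcases hcase with rfl | ⟨rfl, hne2⟩ | ⟨hj3, hj2⟩
    · rw [mem_nSum]
      refine ⟨{c}, ?_, Finset.card_singleton c, Finset.sum_singleton id c⟩
      intro y hy
      rw [Finset.mem_singleton] at hy
      subst hy
      rw [memQ_iff hQ]
      rwa [one_nsmul] at hc
    · rw [mem_nSum]
      exact two_nonelem hQ hQne hne2 hc
    · rw [mem_nSum]
      exact main_ge3 hQ hj3 Q (subset_refl Q) (by omega) c hc
  constructor
  · -- non-exceptional case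
    intro hexc
    push_neg at hexc
    ext x
    simp only [Finset.mem_coe]
    rw [hmemco k x]
    constructor
    · exact hfwd x
    · intro hx
      by_cases hsmall : 2 * k ≤ Q.card
      · -- direct small case
        apply small_exists k _ x hx
        rcases Nat.lt_or_ge k 3 with hk3 | hk3
        · interval_cases k
          · exact Or.inl rfl
          · exact Or.inr (Or.inl ⟨rfl, hexc (Or.inl rfl)⟩)
        · exact Or.inr (Or.inr ⟨hk3, hsmall⟩)
      · -- complement case
        set j := Q.card - k with hj
        have hjk : j + k = Q.card := by omega
        have hj1 : 1 ≤ j := by omega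
        have hnk : Q.card - j = k := by omega
        have hnsmul : Q.card • g = j • g + k • g := by
          rw [← hjk, add_nsmul]
        have ht : (Q.sum id - x) - j • g ∈ H := by
          have heq : (Q.sum id - x) - j • g
              = (Q.sum id - Q.card • g) - (x - k • g) := by
            rw [hnsmul]; abel
          rw [heq]
          exact AddSubgroup.sub_mem H hsig hx
        have htmem : Q.sum id - x ∈ nSum j Q := by
          apply small_exists j _ _ ht
          rcases Nat.lt_or_ge j 3 with hj3 | hj3
          · interval_cases j
            · exact Or.inl rfl
            · refine Or.inr (Or.inl ⟨rfl, hexc (Or.inr (by omega))⟩)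
          · exact Or.inr (Or.inr ⟨hj3, by omega⟩)
        have : x ∈ nSum (Q.card - j) Q := by
          rw [compl_mem (by omega)]
          exact ⟨Q.sum id - x, htmem, (sub_sub_cancel _ _).symm⟩
        rwa [hnk] at this
  · -- exceptional case
    rintro ⟨hor, h2⟩
    by_cases hk2 : k = 2
    · subst hk2
      refine ⟨g + g, ?_, ?_⟩
      · rw [hmemco]
        have : g + g - (2:ℕ) • g = 0 := by rw [two_nsmul]; abel
        rw [this]
        exact AddSubgroup.zero_mem H
      · ext y
        simp only [Finset.mem_coe, Set.mem_diff, Set.mem_singleton_iff, hmemco 2 y]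
        constructor
        · intro hy
          obtain ⟨B, hB, hBc, rfl⟩ := mem_nSum.1 hy
          refine ⟨?_, two_elem_sum_ne hQ h2 hB hBc⟩
          have := sum_mem_coset hQ hB
          rwa [hBc] at this
        · rintro ⟨hy, hyne⟩
          exact mem_nSum.2 (two_elem_mem hQ hQne h2 hy hyne)
    · have hk2' : k = Q.card - 2 := hor.resolve_left hk2
      have hn5 : Q.card ≠ 4 := fun h => hk2 (by omega)
      have hn3 : Q.card ≠ 3 := by
        intro h3
        -- parity contradiction: Q has an involution without fixed points
        obtain ⟨q1, hq1, q2, hq2, hqne⟩ := Finset.one_lt_card.1 (by omega : 1 < Q.card)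
        have hh₀ : q2 - q1 ∈ H := by
          have h1 := (memQ_iff hQ q1).1 hq1
          have h2' := (memQ_iff hQ q2).1 hq2
          have heq : q2 - q1 = (q2 - g) - (q1 - g) := by abel
          rw [heq]
          exact AddSubgroup.sub_mem H h2' h1
        have hh₀ne : q2 - q1 ≠ 0 := sub_ne_zero.2 hqne.symm
        have hE := even_card_invol (fun x => x + (q2 - q1)) Q
          (by
            intro x hx
            show x + (q2 - q1) ∈ Q
            rw [memQ_iff hQ]
            have heq : x + (q2 - q1) - g = (x - g) + (q2 - q1) := by abel
            rw [heq]
            exact AddSubgroup.add_mem H ((memQ_iff hQ x).1 hx) hh₀)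
          (by
            intro x hx
            show x + (q2 - q1) + (q2 - q1) = x
            have h0 : (q2 - q1) + (q2 - q1) = 0 := h2 _ hh₀
            have heq : x + (q2 - q1) + (q2 - q1) = x + ((q2 - q1) + (q2 - q1)) := by abel
            rw [heq, h0, add_zero])
          (by
            intro x hx hcon
            apply hh₀ne
            have hcon' : x + (q2 - q1) = x + 0 := by rw [add_zero]; exact hcon
            exact add_left_cancel hcon')
        obtain ⟨t, ht⟩ := hE
        omega
      have hn : 5 ≤ Q.card := by omega
      have hkn : k + 2 = Q.card := by omega
      have hnsmul : Q.card • g = k • g + (2:ℕ) • g := by rw [← hkn, add_nsmul]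
      refine ⟨Q.sum id - (g + g), ?_, ?_⟩
      · rw [hmemco]
        have heq : Q.sum id - (g + g) - k • g = Q.sum id - Q.card • g := by
          rw [hnsmul, two_nsmul]; abel
        rw [heq]
        exact hsig
      · ext y
        simp only [Finset.mem_coe, Set.mem_diff, Set.mem_singleton_iff, hmemco k y]
        have hcm : ∀ z : G, z ∈ nSum k Q ↔ ∃ t, t ∈ nSum 2 Q ∧ z = Q.sum id - t := by
          intro z
          rw [hk2']
          exact compl_mem (by omega)
        constructor
        · intro hy
          obtain ⟨t, ht, rfl⟩ := (hcm y).1 hy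
          obtain ⟨B, hB, hBc, rfl⟩ := mem_nSum.1 ht
          have htH : B.sum id - (2:ℕ) • g ∈ H := by
            have := sum_mem_coset hQ hB
            rwa [hBc] at this
          constructor
          · have heq : Q.sum id - B.sum id - k • g
                = (Q.sum id - Q.card • g) - (B.sum id - (2:ℕ) • g) := by
              rw [hnsmul]; abel
            rw [heq]
            exact AddSubgroup.sub_mem H hsig htH
          · intro hcon
            exact two_elem_sum_ne hQ h2 hB hBc (sub_right_injective hcon)
        · rintro ⟨hy, hyne⟩
          have htH : (Q.sum id - y) - (2:ℕ) • g ∈ H := by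
            have heq : (Q.sum id - y) - (2:ℕ) • g
                = (Q.sum id - Q.card • g) - (y - k • g) := by
              rw [hnsmul]; abel
            rw [heq]
            exact AddSubgroup.sub_mem H hsig hy
          have htne : Q.sum id - y ≠ g + g := by
            intro hcon
            apply hyne
            have : y = Q.sum id - (Q.sum id - y) := (sub_sub_cancel _ _).symm
            rw [this, hcon]
          have ht2 : Q.sum id - y ∈ nSum 2 Q :=
            mem_nSum.2 (two_elem_mem hQ hQne h2 htH htne)
          exact (hcm y).2 ⟨Q.sum id - y, ht2, (sub_sub_cancel _ _).symm⟩
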